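/- Let a consistent explicit linear multistep method ∑_{j=0}^{k} α_j u^{n+j} = Δt ∑_{j=0}^{k-1} β_j f(u^{n+j}) have order p, i.e., ∑_j α_j = 0 and ∑_j α_j j^q = q ∑_j β_j j^{q-1} for q = 1, ..., p. Suppose φ is (p+1)-times continuously differentiable with φ(0) = 0, φ'(0) = 1 and φ^(k)(0) = 0 for 2 ≤ k ≤ p. Then for any y ∈ C^{p+1}, the local truncation operator L(y, t, Δt) = ∑_{j=0}^{k} (α_j y(t + jΔt) - φ(Δt) β_j y'(t + jΔt)) satisfies L(y, t, Δt) = O((Δt)^{p+1}) as Δt → 0. -/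

import Mathlib

open Filter Asymptotics


private lemma my_step (n : ℕ) (f : ℝ → ℝ) (hd : Differentiable ℝ f) (h0 : f 0 = 0)
    (h : (deriv f) =O[nhds 0] fun x => x ^ n) : f =O[nhds 0] fun x => x ^ (n+1) := by
  obtain ⟨C, hC0, hC⟩ := h.exists_nonneg
  rw [IsBigOWith] at hC
  rw [Metric.eventually_nhds_iff] at hC
  obtain ⟨ε, hε, hball⟩ := hC
  rw [isBigO_iff]
  refine ⟨C, ?_⟩
  rw [Metric.eventually_nhds_iff]
  refine ⟨ε, hε, fun x hx => ?_⟩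
  have hxε : |x| < ε := by simpa [Real.dist_eq] using hx
  have bound : ∀ u ∈ Metric.closedBall (0:ℝ) |x|, ‖deriv f u‖ ≤ C * |x| ^ n := by
    intro u hu
    have hu' : |u| ≤ |x| := by simpa [Real.dist_eq] using hu
    have := hball (y := u) (by simpa [Real.dist_eq] using lt_of_le_of_lt hu' hxε)
    calc ‖deriv f u‖ ≤ C * ‖u ^ n‖ := this
      _ = C * |u| ^ n := by rw [norm_pow]; rfl
      _ ≤ C * |x| ^ n := by
          exact mul_le_mul_of_nonneg_left (pow_le_pow_left₀ (abs_nonneg u) hu' n) hC0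
  have hmem : x ∈ Metric.closedBall (0:ℝ) |x| := by simp [Real.dist_eq]
  have hmem0 : (0:ℝ) ∈ Metric.closedBall (0:ℝ) |x| := by simp [Real.dist_eq, abs_nonneg]
  have := (convex_closedBall (0:ℝ) |x|).norm_image_sub_le_of_norm_deriv_le
    (fun u _ => hd u) bound hmem0 hmem
  rw [h0, sub_zero] at this
  calc ‖f x‖ ≤ C * |x| ^ n * ‖x - 0‖ := this
    _ = C * ‖x ^ (n+1)‖ := by
        rw [sub_zero, norm_pow]
        show C * |x| ^ n * |x| = C * |x| ^ (n + 1)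
        rw [pow_succ]; ring

private lemma my_vanishing : ∀ (n : ℕ) (f : ℝ → ℝ), ContDiff ℝ n f →
    (∀ i < n, iteratedDeriv i f 0 = 0) → f =O[nhds 0] fun x => x ^ n := by
  intro n
  induction n with
  | zero =>
    intro f hf _
    have : f =O[nhds (0:ℝ)] (fun _ => (1:ℝ)) := (hf.continuous.tendsto 0).isBigO_one ℝ
    simpa using this
  | succ n ih =>
    intro f hf h
    have hcast : ((n+1:ℕ) : WithTop ℕ∞) = (n : WithTop ℕ∞) + 1 := by push_cast; rfl
    rw [hcast] at hf
    have hd : Differentiable ℝ f := hf.differentiable (by simp)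
    have h0 : f 0 = 0 := by simpa [iteratedDeriv_zero] using h 0 (Nat.succ_pos n)
    refine my_step n f hd h0 (ih (deriv f) (contDiff_succ_iff_deriv.mp hf).2.2 ?_)
    intro i hi
    rw [← iteratedDeriv_succ']
    exact h (i+1) (Nat.succ_lt_succ hi)

private lemma my_monomial : ∀ (i q : ℕ) (c : ℝ),
    iteratedDeriv i (fun s : ℝ => c * s ^ q) 0 = if q = i then c * i.factorial else 0 := by
  intro i
  induction i with
  | zero =>
    intro q c
    cases q with
    | zero => simp [iteratedDeriv_zero]
    | succ r => simp [iteratedDeriv_zero]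
  | succ i ih =>
    intro q c
    rw [iteratedDeriv_succ']
    cases q with
    | zero =>
      have hder : deriv (fun s : ℝ => c * s ^ 0) = fun s : ℝ => (0:ℝ) * s ^ 0 := by
        funext s; simp
      rw [hder, ih 0 0]
      simp
    | succ r =>
      have hder : deriv (fun s : ℝ => c * s ^ (r+1)) = fun s : ℝ => (c * (r+1)) * s ^ r := by
        funext s
        rw [deriv_const_mul _ (differentiable_pow (r+1)).differentiableAt, deriv_pow_field, Nat.add_sub_cancel]
        push_cast; ring
      rw [hder, ih r (c * (r+1))]
      rcases eq_or_ne r i with rfl | hne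
      · simp [Nat.factorial_succ]; push_cast; ring
      · have : r + 1 ≠ i + 1 := by omega
        simp [hne, this]

private lemma my_add (n : ℕ) (f g : ℝ → ℝ) (x : ℝ) (hf : ContDiff ℝ n f) (hg : ContDiff ℝ n g) :
    iteratedDeriv n (fun s => f s + g s) x = iteratedDeriv n f x + iteratedDeriv n g x := by
  have := iteratedDerivWithin_add (Set.mem_univ x) (uniqueDiffOn_univ) hf.contDiffWithinAt hg.contDiffWithinAt
  simpa [iteratedDerivWithin_univ, Pi.add_def] using this

private lemma my_sub (n : ℕ) (f g : ℝ → ℝ) (x : ℝ) (hf : ContDiff ℝ n f) (hg : ContDiff ℝ n g) :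
    iteratedDeriv n (fun s => f s - g s) x = iteratedDeriv n f x - iteratedDeriv n g x := by
  have := iteratedDerivWithin_sub (Set.mem_univ x) (uniqueDiffOn_univ) hf.contDiffWithinAt hg.contDiffWithinAt
  simpa [iteratedDerivWithin_univ, Pi.sub_def] using this

private lemma my_zero : ∀ (n : ℕ) (x : ℝ), iteratedDeriv n (fun _ : ℝ => (0:ℝ)) x = 0 := by
  intro n
  induction n with
  | zero => simp [iteratedDeriv_zero]
  | succ m ihm =>
    intro x
    rw [iteratedDeriv_succ']
    have hd : deriv (fun _ : ℝ => (0:ℝ)) = fun _ : ℝ => (0:ℝ) := by funext s; simp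
    rw [hd]; exact ihm x

private lemma my_sum {ι : Type*} (u : Finset ι) (F : ι → ℝ → ℝ) (n : ℕ) (x : ℝ)
    (h : ∀ i ∈ u, ContDiff ℝ n (F i)) :
    iteratedDeriv n (fun s => ∑ i ∈ u, F i s) x = ∑ i ∈ u, iteratedDeriv n (F i) x := by
  classical
  induction u using Finset.cons_induction with
  | empty =>
    simp only [Finset.sum_empty]
    exact my_zero n x
  | cons a u ha ih =>
    have hsum : ContDiff ℝ n (fun s => ∑ i ∈ u, F i s) :=
      ContDiff.sum fun i hi => h i (Finset.mem_cons_of_mem hi)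
    simp only [Finset.sum_cons]
    rw [my_add n _ _ x (h a (Finset.mem_cons_self a u)) hsum,
      ih (fun i hi => h i (Finset.mem_cons_of_mem hi))]

private lemma my_affine (y : ℝ → ℝ) (n : ℕ) (hy : ContDiff ℝ n y) (t c : ℝ) :
    iteratedDeriv n (fun s => y (t + c * s)) 0 = c ^ n * iteratedDeriv n y t := by
  have h1 : ContDiff ℝ n (fun z => y (t + z)) := hy.comp (contDiff_const.add contDiff_id)
  have h2 := iteratedDeriv_comp_const_mul h1 c
  have h3 : (fun s => y (t + c * s)) = (fun x => (fun z => y (t + z)) (c * x)) := rfl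
  rw [h3, h2]
  rw [iteratedDeriv_comp_const_add]
  simp
open Filter Asymptotics
/-- sufficiency direction of the order theorem for nonstandard
linear multistep methods: the local truncation error is O((Δt)^{p+1}). -/
theorem nonstandard_lmm_order_sufficiency (k p : ℕ) (α β : ℕ → ℝ)
    (hcons : ∑ j ∈ Finset.range (k+1), α j = 0)
    (horder : ∀ q, 1 ≤ q → q ≤ p →
      ∑ j ∈ Finset.range (k+1), α j * (j:ℝ)^q
        = q * ∑ j ∈ Finset.range k, β j * (j:ℝ)^(q-1))
    (φ : ℝ → ℝ) (hφ : ContDiff ℝ (p+1) φ) (h0 : φ 0 = 0) (h1 : deriv φ 0 = 1)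
    (hder : ∀ i, 2 ≤ i → i ≤ p → iteratedDeriv i φ 0 = 0)
    (y : ℝ → ℝ) (hy : ContDiff ℝ (p+1) y) (t : ℝ) :
    (fun Δt : ℝ => ∑ j ∈ Finset.range (k+1), α j * y (t + j * Δt)
        - φ Δt * ∑ j ∈ Finset.range k, β j * deriv y (t + j * Δt))
      =O[nhds 0] fun Δt => Δt^(p+1) := by
  classical
  set D : ℕ → ℝ := fun q => iteratedDeriv q y t with hD
  set T : ℕ → ℝ → ℝ :=
    fun j s => ∑ q ∈ Finset.range (p+1), (D q * (j:ℝ)^q / q.factorial) * s^q with hTdef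
  set U : ℕ → ℝ → ℝ :=
    fun j s => ∑ q ∈ Finset.range p, (D (q+1) * (j:ℝ)^q / q.factorial) * s^q with hUdef
  have hpc : ((p+1:ℕ) : WithTop ℕ∞) = (p : WithTop ℕ∞) + 1 := by push_cast; rfl
  have hy' : ContDiff ℝ ((p+1:ℕ) : WithTop ℕ∞) y := by rw [hpc]; exact_mod_cast hy
  have hφ' : ContDiff ℝ ((p+1:ℕ) : WithTop ℕ∞) φ := by rw [hpc]; exact_mod_cast hφ
  have hcomp : ∀ j : ℕ, ContDiff ℝ ((p+1:ℕ) : WithTop ℕ∞) (fun s => y (t + (j:ℝ) * s)) :=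
    fun j => hy'.comp (contDiff_const.add (contDiff_const.mul contDiff_id))
  have hdy : ContDiff ℝ (p : WithTop ℕ∞) (deriv y) := by
    rw [hpc] at hy'
    exact (contDiff_succ_iff_deriv.mp hy').2.2
  have hdcomp : ∀ j : ℕ, ContDiff ℝ (p : WithTop ℕ∞) (fun s => deriv y (t + (j:ℝ) * s)) :=
    fun j => hdy.comp (contDiff_const.add (contDiff_const.mul contDiff_id))
  have hTc : ∀ (j m : ℕ), ContDiff ℝ (m : WithTop ℕ∞) (T j) := fun j m =>
    ContDiff.sum fun q _ => contDiff_const.mul (contDiff_id.pow q)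
  have hUc : ∀ (j m : ℕ), ContDiff ℝ (m : WithTop ℕ∞) (U j) := fun j m =>
    ContDiff.sum fun q _ => contDiff_const.mul (contDiff_id.pow q)
  -- iterated derivatives of the Taylor polynomials at 0
  have hTd : ∀ (j i : ℕ), i ≤ p → iteratedDeriv i (T j) 0 = (j:ℝ)^i * D i := by
    intro j i hi
    have hs := my_sum (Finset.range (p+1))
      (fun q => fun s : ℝ => (D q * (j:ℝ)^q / q.factorial) * s^q) i 0
      (fun q _ => contDiff_const.mul (contDiff_id.pow q))
    rw [show T j = fun s : ℝ => ∑ q ∈ Finset.range (p+1),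
      (D q * (j:ℝ)^q / q.factorial) * s^q from rfl, hs]
    simp_rw [my_monomial]
    rw [Finset.sum_ite_eq' (Finset.range (p+1)) i
      (fun q => (D q * (j:ℝ)^q / q.factorial) * (i.factorial : ℝ))]
    rw [if_pos (Finset.mem_range.mpr (Nat.lt_succ_of_le hi))]
    have : (i.factorial : ℝ) ≠ 0 := Nat.cast_ne_zero.mpr i.factorial_ne_zero
    field_simp
  have hUd : ∀ (j i : ℕ), i < p → iteratedDeriv i (U j) 0 = (j:ℝ)^i * D (i+1) := by
    intro j i hi
    have hs := my_sum (Finset.range p)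
      (fun q => fun s : ℝ => (D (q+1) * (j:ℝ)^q / q.factorial) * s^q) i 0
      (fun q _ => contDiff_const.mul (contDiff_id.pow q))
    rw [show U j = fun s : ℝ => ∑ q ∈ Finset.range p,
      (D (q+1) * (j:ℝ)^q / q.factorial) * s^q from rfl, hs]
    simp_rw [my_monomial]
    rw [Finset.sum_ite_eq' (Finset.range p) i
      (fun q => (D (q+1) * (j:ℝ)^q / q.factorial) * (i.factorial : ℝ))]
    rw [if_pos (Finset.mem_range.mpr hi)]
    have : (i.factorial : ℝ) ≠ 0 := Nat.cast_ne_zero.mpr i.factorial_ne_zero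
    field_simp
  -- big-O facts
  have hA : ∀ j : ℕ, (fun s : ℝ => y (t + (j:ℝ)*s) - T j s) =O[nhds 0]
      fun x : ℝ => x^(p+1) := by
    intro j
    apply my_vanishing (p+1) _ (((hcomp j).sub (hTc j (p+1))))
    intro i hi
    have hi' : i ≤ p := Nat.lt_succ_iff.mp hi
    have hcast : ((i:ℕ) : WithTop ℕ∞) ≤ ((p+1:ℕ) : WithTop ℕ∞) :=
      Nat.cast_le.mpr (Nat.le_succ_of_le hi')
    rw [my_sub i _ _ 0 ((hcomp j).of_le hcast) (hTc j i)]
    rw [my_affine y i (hy'.of_le hcast) t (j:ℝ), hTd j i hi']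
    simp only [hD]
    ring
  have hB : ∀ j : ℕ, (fun s : ℝ => deriv y (t + (j:ℝ)*s) - U j s) =O[nhds 0]
      fun x : ℝ => x^p := by
    intro j
    apply my_vanishing p _ ((hdcomp j).sub (hUc j p))
    intro i hi
    have hcast : ((i:ℕ) : WithTop ℕ∞) ≤ (p : WithTop ℕ∞) := Nat.cast_le.mpr hi.le
    rw [my_sub i _ _ 0 ((hdcomp j).of_le hcast) (hUc j i)]
    rw [my_affine (deriv y) i (hdy.of_le hcast) t (j:ℝ), hUd j i hi]
    simp only [hD]
    rw [iteratedDeriv_succ']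
    ring
  have hφ1 : φ =O[nhds 0] fun x : ℝ => x ^ 1 := by
    apply my_vanishing 1 φ (hφ'.of_le (Nat.cast_le.mpr (Nat.le_add_left 1 p)))
    intro i hi
    interval_cases i
    simpa [iteratedDeriv_zero] using h0
  have hψ : (fun s : ℝ => φ s - s) =O[nhds 0] fun x : ℝ => x^(p+1) := by
    refine my_vanishing (p+1) (fun s : ℝ => φ s - s) ?_ ?_
    · exact hφ'.sub contDiff_id
    intro i hi
    have hcast : ((i:ℕ) : WithTop ℕ∞) ≤ ((p+1:ℕ) : WithTop ℕ∞) :=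
      Nat.cast_le.mpr hi.le
    have hidc : ContDiff ℝ ((i:ℕ) : WithTop ℕ∞) (fun s : ℝ => s) := contDiff_id
    rw [my_sub i φ (fun s => s) 0 (hφ'.of_le hcast) hidc]
    have hid : iteratedDeriv i (fun s : ℝ => s) 0
        = if 1 = i then (1:ℝ) * (i.factorial : ℝ) else 0 := by
      have h' : (fun s : ℝ => s) = fun s : ℝ => (1:ℝ) * s ^ 1 := by funext s; ring
      rw [h', my_monomial]
    match i, hi with
    | 0, _ => simp [iteratedDeriv_zero, h0, hid]
    | 1, _ => rw [iteratedDeriv_one, h1, hid]; norm_num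
    | (n+2), hi =>
      rw [hder (n+2) (by omega) (by omega), hid]
      norm_num
  -- bounded sums
  have hSU : Continuous (fun s : ℝ => ∑ j ∈ Finset.range k, β j * U j s) := by
    apply continuous_finset_sum
    intro j _
    exact continuous_const.mul (continuous_finset_sum _ fun q _ =>
      continuous_const.mul (continuous_pow q))
  have hE1 : (fun s : ℝ => ∑ j ∈ Finset.range (k+1), α j * (y (t + (j:ℝ)*s) - T j s))
      =O[nhds 0] fun x : ℝ => x^(p+1) :=
    IsBigO.fun_sum fun j _ => (hA j).const_mul_left (α j)
  have hSB : (fun s : ℝ => ∑ j ∈ Finset.range k, β j * (deriv y (t + (j:ℝ)*s) - U j s))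
      =O[nhds 0] fun x : ℝ => x^p :=
    IsBigO.fun_sum fun j _ => (hB j).const_mul_left (β j)
  have hE2 : (fun s : ℝ => φ s * ∑ j ∈ Finset.range k, β j * (deriv y (t + (j:ℝ)*s) - U j s))
      =O[nhds 0] fun x : ℝ => x^(p+1) := by
    have := hφ1.mul hSB
    have he : (fun x : ℝ => x^1 * x^p) = fun x : ℝ => x^(p+1) := by
      funext x; rw [← pow_add, Nat.add_comm]
    exact he ▸ this
  have hE3 : (fun s : ℝ => (φ s - s) * ∑ j ∈ Finset.range k, β j * U j s)
      =O[nhds 0] fun x : ℝ => x^(p+1) := by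
    have := hψ.mul ((hSU.tendsto 0).isBigO_one ℝ)
    simpa using this
  -- key algebraic identity
  have hkey : ∀ s : ℝ, ∑ j ∈ Finset.range (k+1), α j * T j s
      = s * ∑ j ∈ Finset.range k, β j * U j s := by
    intro s
    have hL : ∑ j ∈ Finset.range (k+1), α j * T j s
        = ∑ q ∈ Finset.range (p+1), (D q / q.factorial * s^q)
            * (∑ j ∈ Finset.range (k+1), α j * (j:ℝ)^q) := by
      simp only [hTdef]
      simp_rw [Finset.mul_sum]
      rw [Finset.sum_comm]
      refine Finset.sum_congr rfl fun q _ => ?_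
      refine Finset.sum_congr rfl fun j _ => ?_
      ring
    have hR : s * ∑ j ∈ Finset.range k, β j * U j s
        = ∑ q ∈ Finset.range p, (D (q+1) / q.factorial * s^(q+1))
            * (∑ j ∈ Finset.range k, β j * (j:ℝ)^q) := by
      simp only [hUdef]
      rw [Finset.mul_sum]
      simp_rw [Finset.mul_sum]
      rw [Finset.sum_comm]
      refine Finset.sum_congr rfl fun q _ => ?_
      refine Finset.sum_congr rfl fun j _ => ?_
      ring
    rw [hL, hR, Finset.sum_range_succ']
    have h00 : (∑ j ∈ Finset.range (k+1), α j * (j:ℝ)^0) = 0 := by simpa using hcons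
    rw [h00, mul_zero, add_zero]
    refine Finset.sum_congr rfl fun q hq => ?_
    have hq' : q + 1 ≤ p := Nat.succ_le_of_lt (Finset.mem_range.mp hq)
    rw [horder (q+1) (Nat.le_add_left 1 q) hq']
    have hfac : ((q+1).factorial : ℝ) = (q+1) * q.factorial := by
      exact_mod_cast Nat.factorial_succ q
    have hq0 : ((q.factorial : ℝ)) ≠ 0 := Nat.cast_ne_zero.mpr q.factorial_ne_zero
    simp only [Nat.add_sub_cancel, hfac]
    push_cast
    field_simp
  -- final assembly
  have heq : (fun Δt : ℝ => ∑ j ∈ Finset.range (k+1), α j * y (t + j * Δt)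
        - φ Δt * ∑ j ∈ Finset.range k, β j * deriv y (t + j * Δt))
      = fun s : ℝ => (∑ j ∈ Finset.range (k+1), α j * (y (t + (j:ℝ)*s) - T j s))
          - φ s * (∑ j ∈ Finset.range k, β j * (deriv y (t + (j:ℝ)*s) - U j s))
          - (φ s - s) * (∑ j ∈ Finset.range k, β j * U j s) := by
    funext s
    have hk := hkey s
    have e1 : ∑ j ∈ Finset.range (k+1), α j * (y (t + (j:ℝ)*s) - T j s)
        = (∑ j ∈ Finset.range (k+1), α j * y (t + (j:ℝ)*s))
          - ∑ j ∈ Finset.range (k+1), α j * T j s := by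
      rw [← Finset.sum_sub_distrib]
      exact Finset.sum_congr rfl fun j _ => by ring
    have e2 : ∑ j ∈ Finset.range k, β j * (deriv y (t + (j:ℝ)*s) - U j s)
        = (∑ j ∈ Finset.range k, β j * deriv y (t + (j:ℝ)*s))
          - ∑ j ∈ Finset.range k, β j * U j s := by
      rw [← Finset.sum_sub_distrib]
      exact Finset.sum_congr rfl fun j _ => by ring
    rw [e1, e2]
    linear_combination hk
  rw [heq]
  exact (hE1.sub hE2).sub hE3
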